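/- Let w : Δ(K) × ℝ → ℝ be bounded and concave in its first variable, and for δ > 0 define the inf-convolution w_δ(z) := min_{z' ∈ Δ(K)×ℝ} { w(z') + |z − z'|²/(2δ) } on ℝ^{K+1}. Suppose w_δ has a second-order Taylor expansion at a point z₀ = (p₀, y₀), and let z'' = (p'', y'') ∈ Δ(K)×ℝ attain the minimum at z₀. Then for every direction m in the tangent space T_{Δ(K)}(p''), the quadratic form of the Hessian of w_δ in the p-variable at z₀ satisfies ⟨m, D²_p w_δ(z₀) m⟩ ≤ 0. -/

import Mathlib

open Filter Asymptotics

/-- if `w` is bounded on `Δ(K) × ℝ` and concave in `p`, `w_δ` is its quadratic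
inf-convolution, `z''` attains the minimum defining `w_δ(z₀)`, and `w_δ` has a second-order
Taylor expansion at `z₀` with symmetric Hessian form `Q`, then `⟨m, D²_p w_δ(z₀) m⟩ ≤ 0`
for every tangent direction `m ∈ T_{Δ(K)}(p'')`. -/
theorem stmt_14 {K : Type*} [Fintype K] [Nonempty K]
    (δ : ℝ) (hδ : 0 < δ)
    (w : (K → ℝ) × ℝ → ℝ) (M : ℝ)
    (hwb : ∀ z ∈ (stdSimplex ℝ K) ×ˢ (Set.univ : Set ℝ), |w z| ≤ M)
    (hconc : ∀ y : ℝ, ConcaveOn ℝ (stdSimplex ℝ K) (fun p => w (p, y)))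
    (wδ : (K → ℝ) × ℝ → ℝ)
    (hwδ : ∀ z : (K → ℝ) × ℝ,
      wδ z = sInf ((fun z' => w z' + ‖z - z'‖ ^ 2 / (2 * δ)) ''
        ((stdSimplex ℝ K) ×ˢ (Set.univ : Set ℝ))))
    (z₀ z'' : (K → ℝ) × ℝ)
    (hz'' : z'' ∈ (stdSimplex ℝ K) ×ˢ (Set.univ : Set ℝ))
    (hattain : wδ z₀ = w z'' + ‖z₀ - z''‖ ^ 2 / (2 * δ))
    (D : ((K → ℝ) × ℝ) →ₗ[ℝ] ℝ)
    (Q : ((K → ℝ) × ℝ) →ₗ[ℝ] ((K → ℝ) × ℝ) →ₗ[ℝ] ℝ)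
    (hQsymm : ∀ a b, Q a b = Q b a)
    (hTaylor : (fun z => wδ z - wδ z₀ - D (z - z₀) - (1 / 2) * Q (z - z₀) (z - z₀))
        =o[nhds z₀] (fun z => ‖z - z₀‖ ^ 2)) :
    ∀ m : K → ℝ,
      (∃ ε > (0 : ℝ), z''.1 + ε • m ∈ stdSimplex ℝ K ∧ z''.1 - ε • m ∈ stdSimplex ℝ K) →
      Q (m, 0) (m, 0) ≤ 0 := by
  intro m hm
  obtain ⟨ε, hε, h1, h2⟩ := hm
  set u : (K → ℝ) × ℝ := (m, 0) with hu
  set S := (stdSimplex ℝ K) ×ˢ (Set.univ : Set ℝ) with hS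
  -- simplex membership along the segment
  have hseg : ∀ t : ℝ, |t| ≤ ε → z''.1 + t • m ∈ stdSimplex ℝ K := by
    intro t ht
    have hc := convex_stdSimplex ℝ K
    have hbd := abs_le.1 ht
    have ha : (0:ℝ) ≤ (ε + t)/(2*ε) := by
      apply div_nonneg <;> linarith
    have hb : (0:ℝ) ≤ (ε - t)/(2*ε) := by
      apply div_nonneg <;> linarith
    have hab : (ε + t)/(2*ε) + (ε - t)/(2*ε) = 1 := by
      field_simp
      ring
    have hmem := hc h1 h2 ha hb hab
    have heq : ((ε + t)/(2*ε)) • (z''.1 + ε • m) + ((ε - t)/(2*ε)) • (z''.1 - ε • m)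
        = z''.1 + t • m := by
      ext k
      have hε' : ε ≠ 0 := ne_of_gt hε
      simp only [Pi.add_apply, Pi.smul_apply, Pi.sub_apply, smul_eq_mul]
      field_simp
      ring
    rwa [heq] at hmem
  -- bounded below
  have hBdd : ∀ z : (K→ℝ)×ℝ, BddBelow ((fun z' => w z' + ‖z - z'‖ ^ 2 / (2 * δ)) '' S) := by
    intro z
    refine ⟨-M, ?_⟩
    rintro x ⟨z', hz', rfl⟩
    have hb := abs_le.1 (hwb z' hz')
    have hp : 0 ≤ ‖z - z'‖ ^ 2 / (2 * δ) := by positivity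
    linarith [hb.1]
  -- key inequality
  have key : ∀ t : ℝ, |t| ≤ ε →
      wδ (z₀ + t • u) ≤ w (z'' + t • u) + ‖z₀ - z''‖ ^ 2 / (2 * δ) := by
    intro t ht
    rw [hwδ]
    have hmem : z'' + t • u ∈ S := by
      rw [hS, Set.mem_prod]
      refine ⟨?_, trivial⟩
      have : (z'' + t • u).1 = z''.1 + t • m := by simp [hu]
      rw [this]
      exact hseg t ht
    have hin : w (z'' + t • u) + ‖(z₀ + t • u) - (z'' + t • u)‖ ^ 2 / (2*δ) ∈
        ((fun z' => w z' + ‖(z₀ + t • u) - z'‖ ^ 2 / (2 * δ)) '' S) := ⟨_, hmem, rfl⟩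
    have hle := csInf_le (hBdd _) hin
    have heq : (z₀ + t • u) - (z'' + t • u) = z₀ - z'' := by abel
    rwa [heq] at hle
  -- concavity step
  have hconc' : ∀ t : ℝ, |t| ≤ ε →
      w (z'' + t • u) + w (z'' - t • u) ≤ 2 * w z'' := by
    intro t ht
    have hA := hseg t ht
    have hB := hseg (-t) (by simpa using ht)
    have hcc := (hconc z''.2).2 hA hB (by norm_num : (0:ℝ) ≤ 1/2)
      (by norm_num : (0:ℝ) ≤ 1/2) (by norm_num : (1:ℝ)/2 + 1/2 = 1)
    have hmid : (1/2 : ℝ) • (z''.1 + t • m) + (1/2 : ℝ) • (z''.1 + (-t) • m) = z''.1 := by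
      module
    rw [hmid] at hcc
    have e1 : z'' + t • u = (z''.1 + t • m, z''.2) := by
      ext <;> simp [hu]
    have e2 : z'' - t • u = (z''.1 + (-t) • m, z''.2) := by
      ext <;> simp [hu, sub_eq_add_neg]
    rw [e1, e2]
    simp only [smul_eq_mul] at hcc
    have : w (z''.1, z''.2) = w z'' := by rw [Prod.mk.eta]
    rw [this] at hcc
    linarith
  -- combined inequality
  have hsum : ∀ t : ℝ, |t| ≤ ε →
      wδ (z₀ + t • u) + wδ (z₀ - t • u) ≤ 2 * wδ z₀ := by
    intro t ht
    have k1 := key t ht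
    have k2 := key (-t) (by simpa using ht)
    have e1 : z₀ + (-t) • u = z₀ - t • u := by module
    have e2 : z'' + (-t) • u = z'' - t • u := by module
    rw [e1, e2] at k2
    have hc := hconc' t ht
    rw [hattain]
    linarith
  -- conclude via Taylor
  have main : ∀ c : ℝ, 0 < c → Q u u ≤ c := by
    intro c hc
    set N := ‖u‖ ^ 2 with hN
    have hN0 : 0 ≤ N := sq_nonneg _
    have hc' : 0 < c / (2 * (N + 1)) := by positivity
    have hev := hTaylor.def hc'
    rw [Metric.eventually_nhds_iff] at hev
    obtain ⟨r, hr, hball⟩ := hev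
    set t := min ε (r / (2 * (‖u‖ + 1))) with htdef
    have ht0 : 0 < t := lt_min hε (by positivity)
    have htε : |t| ≤ ε := by rw [abs_of_pos ht0]; exact min_le_left _ _
    have hnorm : ‖t • u‖ < r := by
      rw [norm_smul, Real.norm_eq_abs, abs_of_pos ht0]
      have h1 : t ≤ r / (2 * (‖u‖ + 1)) := min_le_right _ _
      have h2 : t * ‖u‖ ≤ (r / (2 * (‖u‖ + 1))) * ‖u‖ :=
        mul_le_mul_of_nonneg_right h1 (norm_nonneg _)
      have h3 : (r / (2 * (‖u‖ + 1))) * ‖u‖ < r := by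
        rw [div_mul_eq_mul_div, div_lt_iff₀ (by positivity)]
        nlinarith [norm_nonneg u]
      linarith
    have hf1 := hball (show dist (z₀ + t • u) z₀ < r by
      simpa [dist_eq_norm] using hnorm)
    have hf2 := hball (show dist (z₀ - t • u) z₀ < r by
      simpa [dist_eq_norm] using hnorm)
    rw [add_sub_cancel_left] at hf1
    rw [sub_sub_cancel_left] at hf2
    simp only [Real.norm_eq_abs, norm_neg, map_neg, LinearMap.neg_apply] at hf1 hf2
    have hQ : Q (t • u) (t • u) = t^2 * Q u u := by
      simp only [map_smul, smul_eq_mul, LinearMap.smul_apply]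
      ring
    have hnn : ‖t • u‖ ^ 2 = t^2 * N := by
      rw [norm_smul, Real.norm_eq_abs, mul_pow, sq_abs, hN]
    have habs : |‖t • u‖ ^ 2| = t^2 * N := by
      rw [abs_of_nonneg (by positivity)]; exact hnn
    rw [hQ, habs] at hf1 hf2
    have hsum' := hsum t htε
    have hb1 := (abs_le.1 hf1).1
    have hb2 := (abs_le.1 hf2).1
    -- t² Q u u ≤ 2 c' t² N
    have ht2 : 0 < t^2 := by positivity
    have hkey : t^2 * Q u u ≤ 2 * (c / (2 * (N + 1))) * (t^2 * N) := by
      nlinarith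
    have hq : Q u u ≤ 2 * (c / (2 * (N + 1))) * N := by
      have := (mul_le_mul_iff_right₀ ht2).1 (by linarith [hkey] : t^2 * Q u u ≤ t^2 * (2 * (c / (2 * (N + 1))) * N))
      linarith
    have hfin : 2 * (c / (2 * (N + 1))) * N ≤ c := by
      have he : 2 * (c / (2 * (N + 1))) * N = c * N / (N + 1) := by
        field_simp
      rw [he, div_le_iff₀ (by linarith : (0:ℝ) < N + 1)]
      have := mul_le_mul_of_nonneg_left (by linarith : N ≤ N + 1) hc.le
      linarith
    linarith
  have : Q u u ≤ 0 := le_of_forall_pos_le_add (by intro c hc; simpa using main c hc)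
  simpa [hu] using this
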